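/- Let M be a simplicial complex and let {a,b} ∈ M be an edge satisfying the Link Condition. Let B denote the complex whose faces are the sets S and S ∪ {b} for S ∈ ast(b, lk(a,M)) (i.e., B = {b} * ast(b, lk(a,M))). Then ast(a,M) ∩ B = lk(a,M). -/
import Mathlib


open Finset

variable {V : Type*} [DecidableEq V]

/-- A (finite) simplicial complex, given by its finite family of faces:
closed under subsets and containing the empty set.  The vertices of `K` are
exactly the elements `v` with `{v} ∈ K`. -/
def IsComplex (K : Finset (Finset V)) : Prop :=
  ∅ ∈ K ∧ ∀ S ∈ K, ∀ T ⊆ S, T ∈ K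

/-- The dimension of `K` : the maximum of `|F| - 1` over the faces `F` of `K`. -/
def dimC (K : Finset (Finset V)) : ℤ :=
  ((K.sup Finset.card : ℕ) : ℤ) - 1

/-- `T` is a missing face of `K` : a set of vertices of `K` which is not a face of `K`
while all its proper subsets are faces of `K`. -/
def IsMissingFace (K : Finset (Finset V)) (T : Finset V) : Prop :=
  (∀ x ∈ T, ({x} : Finset V) ∈ K) ∧ T ∉ K ∧ ∀ S ⊂ T, S ∈ K

/-- The contraction of `u` onto `v` is admissible if no missing face of `K` of
dimension `≤ dim K` contains both `u` and `v`. -/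
def Admissible (K : Finset (Finset V)) (u v : V) : Prop :=
  ∀ T : Finset V, IsMissingFace K T → (T.card : ℤ) - 1 ≤ dimC K → ¬(u ∈ T ∧ v ∈ T)

/-- The contraction of `u` onto `v`:
`K' = {T ∈ K : u ∉ T} ∪ {(T \ {u}) ∪ {v} : u ∈ T ∈ K}`. -/
def contractC (K : Finset (Finset V)) (u v : V) : Finset (Finset V) :=
  K.filter (fun T => u ∉ T) ∪ (K.filter (fun T => u ∈ T)).image (fun T => insert v (T.erase u))

/-- The link of a face: `lk(S,K) = {T ∈ K : T ∩ S = ∅ ∧ T ∪ S ∈ K}`. -/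
def linkC (K : Finset (Finset V)) (S : Finset V) : Finset (Finset V) :=
  K.filter (fun T => T ∩ S = ∅ ∧ T ∪ S ∈ K)

/-- The `m`-skeleton: all faces of dimension at most `m`. -/
def skelC (K : Finset (Finset V)) (m : ℤ) : Finset (Finset V) :=
  K.filter (fun F => (F.card : ℤ) - 1 ≤ m)

/-- The antistar of a vertex: `ast(v,K) = {T ∈ K : v ∉ T}`. -/
def astC (K : Finset (Finset V)) (v : V) : Finset (Finset V) :=
  K.filter fun T => v ∉ T

/-- `B = {b} * ast(b, lk(a,M))`: the faces are the sets `S` and `S ∪ {b}`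
for `S ∈ ast(b, lk(a,M))`. -/
def coneB (M : Finset (Finset V)) (a b : V) : Finset (Finset V) :=
  astC (linkC M {a}) b ∪ (astC (linkC M {a}) b).image fun S => insert b S

/-- If the edge `{a,b}` of `M` satisfies the Link Condition and
`B = {b} * ast(b, lk(a,M))`, then `ast(a,M) ∩ B = lk(a,M)`. -/
theorem antistar_inter_cone_eq_link_of_linkCondition
    (M : Finset (Finset V)) (hM : IsComplex M) (a b : V) (hab : a ≠ b)
    (he : ({a, b} : Finset V) ∈ M)
    (hLC : linkC M {a} ∩ linkC M {b} = linkC M {a, b}) :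
    astC M a ∩ coneB M a b = linkC M {a} := by
  obtain ⟨-, hdown⟩ := hM
  ext T
  simp only [coneB, astC, linkC, Finset.mem_inter, Finset.mem_filter, Finset.mem_union,
    Finset.mem_image]
  constructor
  · rintro ⟨⟨hTM, haT⟩, h⟩
    rcases h with ⟨⟨-, hTi, hTu⟩, -⟩ | ⟨S, ⟨⟨hSM, hSi, hSu⟩, hbS⟩, rfl⟩
    · exact ⟨hTM, hTi, hTu⟩
    · have hSlb : S ∈ linkC M {b} := by
        refine Finset.mem_filter.2 ⟨hSM, ?_, ?_⟩
        · ext x; simp only [Finset.mem_inter, Finset.mem_singleton, Finset.notMem_empty,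
            iff_false, not_and]
          rintro hx rfl; exact hbS hx
        · have : S ∪ {b} = insert b S := by ext x; simp [or_comm]
          rw [this]; exact hTM
      have hSlab : S ∈ linkC M {a, b} := by
        rw [← hLC]
        exact Finset.mem_inter.2 ⟨Finset.mem_filter.2 ⟨hSM, hSi, hSu⟩, hSlb⟩
      obtain ⟨-, -, hSab⟩ := Finset.mem_filter.1 hSlab
      refine ⟨hTM, ?_, ?_⟩
      · ext x; simp only [Finset.mem_inter, Finset.mem_singleton, Finset.notMem_empty,
          iff_false, not_and]
        rintro hx rfl; exact haT hx
      · have : insert b S ∪ {a} = S ∪ {a, b} := by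
          ext x; simp [or_comm, or_assoc, or_left_comm]
        rw [this]; exact hSab
  · rintro ⟨hTM, hTi, hTu⟩
    have haT : a ∉ T := by
      intro h
      have : a ∈ T ∩ {a} := Finset.mem_inter.2 ⟨h, Finset.mem_singleton_self a⟩
      rw [hTi] at this; exact absurd this (Finset.notMem_empty a)
    refine ⟨⟨hTM, haT⟩, ?_⟩
    by_cases hbT : b ∈ T
    · right
      refine ⟨T.erase b, ⟨⟨hdown T hTM _ (Finset.erase_subset b T), ?_, ?_⟩,
        Finset.notMem_erase b T⟩, Finset.insert_erase hbT⟩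
      · ext x; simp only [Finset.mem_inter, Finset.mem_erase, Finset.mem_singleton,
          Finset.notMem_empty, iff_false, not_and]
        rintro ⟨-, hx⟩ rfl; exact haT hx
      · exact hdown _ hTu _ (Finset.union_subset_union (Finset.erase_subset b T) le_rfl)
    · left
      exact ⟨⟨hTM, hTi, hTu⟩, hbT⟩
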